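/- For every integer k ≥ 1 and every edge-coloured graph G, the homomorphism density of the alternating path P_{2k}^A in G satisfies t(P_{2k}^A, G) ≤ (1/2)^{2k}. -/

import Mathlib

/-- An edge-coloured graph: a finite vertex set with a red graph and a blue
graph whose edge sets are disjoint. -/
structure EdgeColouredGraph where
  V : Type
  fintypeV : Fintype V
  red : SimpleGraph V
  blue : SimpleGraph V
  disjoint : ∀ u v : V, ¬ (red.Adj u v ∧ blue.Adj u v)

attribute [instance] EdgeColouredGraph.fintypeV

/-- A homomorphism of edge-coloured graphs sends red edges to red edges and
blue edges to blue edges. -/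
def IsHom (H G : EdgeColouredGraph) (φ : H.V → G.V) : Prop :=
  (∀ ⦃u v⦄, H.red.Adj u v → G.red.Adj (φ u) (φ v)) ∧
  (∀ ⦃u v⦄, H.blue.Adj u v → G.blue.Adj (φ u) (φ v))

/-- The number of homomorphisms from `H` to `G`. -/
noncomputable def homCount (H G : EdgeColouredGraph) : ℕ :=
  Nat.card {φ : H.V → G.V // IsHom H G φ}

/-- The homomorphism density `t(H,G)`. -/
noncomputable def homDensity (H G : EdgeColouredGraph) : ℝ :=
  (homCount H G : ℝ) / (Nat.card G.V : ℝ) ^ (Nat.card H.V)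

/-- The alternating path `P_k^A`, with vertices `v_0, …, v_k`, the edge
`v_i v_{i+1}` being red for even `i` and blue for odd `i`. -/
def altPath (k : ℕ) : EdgeColouredGraph where
  V := Fin (k + 1)
  fintypeV := inferInstance
  red := SimpleGraph.fromRel (fun i j => (i : ℕ) + 1 = (j : ℕ) ∧ Even (i : ℕ))
  blue := SimpleGraph.fromRel (fun i j => (i : ℕ) + 1 = (j : ℕ) ∧ Odd (i : ℕ))
  disjoint := by
    rintro u v ⟨⟨-, hr⟩, ⟨-, hb⟩⟩
    rcases hr with ⟨h1, h2⟩ | ⟨h1, h2⟩ <;> rcases hb with ⟨h3, h4⟩ | ⟨h3, h4⟩ <;>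
      simp only [Nat.even_iff, Nat.odd_iff] at h2 h4 <;> omega

/-- The number of red edges of `F`. -/
noncomputable def eRed (F : EdgeColouredGraph) : ℕ := Nat.card F.red.edgeSet

/-- The number of blue edges of `F`. -/
noncomputable def eBlue (F : EdgeColouredGraph) : ℕ := Nat.card F.blue.edgeSet

/-- The total number of edges of `F`. -/
noncomputable def eTotal (F : EdgeColouredGraph) : ℕ := eRed F + eBlue F

open Matrix Finset Complex

section Analytic

variable {V : Type} [Fintype V] [DecidableEq V]

omit [DecidableEq V] in
private lemma mulVec_sum' (T : Matrix V V ℂ) (s : Finset ℕ) (f : ℕ → (V → ℂ)) :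
    T *ᵥ (∑ i ∈ s, f i) = ∑ i ∈ s, T *ᵥ f i := by
  funext v
  simp only [Matrix.mulVec, dotProduct, Finset.sum_apply, Finset.mul_sum]
  exact Finset.sum_comm

omit [DecidableEq V] in
private lemma sum_dotProduct' (s : Finset ℕ) (f : ℕ → (V → ℂ)) (w : V → ℂ) :
    (∑ j ∈ s, f j) ⬝ᵥ w = ∑ j ∈ s, f j ⬝ᵥ w := by
  simp only [dotProduct, Finset.sum_apply, Finset.sum_mul]
  exact Finset.sum_comm

omit [DecidableEq V] in
private lemma star_dot_self (y : V → ℂ) :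
    star y ⬝ᵥ y = ((∑ v, Complex.normSq (y v) : ℝ) : ℂ) := by
  simp only [dotProduct, Pi.star_apply]
  push_cast
  refine Finset.sum_congr rfl fun v _ => ?_
  rw [mul_comm, Complex.star_def, Complex.mul_conj]

/-- Berger's power inequality for the numerical radius (Pearcy's proof). -/
private lemma pearcy (T : Matrix V V ℂ)
    (hT : ∀ z : V → ℂ, ‖star z ⬝ᵥ (T *ᵥ z)‖ ≤ ∑ v, Complex.normSq (z v))
    (k : ℕ) (hk : 1 ≤ k) (z : V → ℂ) :
    ‖star z ⬝ᵥ ((T ^ k) *ᵥ z)‖ ≤ ∑ v, Complex.normSq (z v) := by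
  have hNnonneg : (0:ℝ) ≤ ∑ v, Complex.normSq (z v) :=
    Finset.sum_nonneg fun v _ => Complex.normSq_nonneg _
  set φ : ℂ := star z ⬝ᵥ ((T ^ k) *ᵥ z) with hφdef
  by_cases hφ : φ = 0
  · simp [hφ, hNnonneg]
  obtain ⟨u, hu⟩ : ∃ u : ℂ, u ^ k = ((‖φ‖ : ℝ) : ℂ) / φ :=
    IsAlgClosed.exists_pow_nat_eq _ (by omega : 0 < k)
  have hukφ : u ^ k * φ = ((‖φ‖ : ℝ) : ℂ) := by
    rw [hu]; field_simp
  have habsu : ‖u‖ = 1 := by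
    have h1 : ‖u‖ ^ k = 1 := by
      rw [← norm_pow, hu, norm_div, Complex.norm_real, Real.norm_eq_abs,
        _root_.abs_of_nonneg (norm_nonneg φ), div_self]
      simpa using hφ
    have h0 := norm_nonneg u
    rcases lt_trichotomy (‖u‖) 1 with h | h | h
    · nlinarith [pow_lt_one₀ h0 h (show k ≠ 0 by omega)]
    · exact h
    · nlinarith [one_lt_pow₀ h (show k ≠ 0 by omega)]
  set ω : ℂ := Complex.exp (2 * Real.pi * Complex.I / k) with hωdef
  have hprim : IsPrimitiveRoot ω k := Complex.isPrimitiveRoot_exp k (by omega)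
  have hωk : ω ^ k = 1 := hprim.pow_eq_one
  have habsω : ‖ω‖ = 1 := by
    rw [hωdef, show (2 * (Real.pi:ℂ) * Complex.I / k) = ((2 * Real.pi / k : ℝ) : ℂ) * Complex.I by
      push_cast; ring]
    exact Complex.norm_exp_ofReal_mul_I _
  have horth : ∀ i : ℕ, 0 < i → i < k → ∑ j ∈ range k, (ω ^ i) ^ j = 0 := by
    intro i hi0 hik
    rw [geom_sum_eq (hprim.pow_ne_one_of_pos_of_lt hi0.ne' hik), ← pow_right_comm, hωk, one_pow,
      sub_self, zero_div]
  set X : ℕ → (V → ℂ) := fun i => (T ^ i) *ᵥ z with hXdef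
  set y : ℕ → (V → ℂ) := fun j => ∑ i ∈ range k, ((ω ^ j * u) ^ i) • X i with hydef
  set w : V → ℂ := z - (u ^ k) • X k with hwdef
  have hX0 : X 0 = z := by rw [hXdef]; simp [Matrix.one_mulVec]
  have claim1 : ∀ j : ℕ, y j - (ω ^ j * u) • (T *ᵥ y j) = w := by
    intro j
    set a : ℂ := ω ^ j * u with hadef
    have hak : a ^ k = u ^ k := by
      rw [hadef, mul_pow, ← pow_right_comm, hωk, one_pow, one_mul]
    have hTy : T *ᵥ y j = ∑ i ∈ range k, a ^ i • X (i + 1) := by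
      rw [hydef]
      simp only
      rw [mulVec_sum']
      refine Finset.sum_congr rfl fun i _ => ?_
      rw [Matrix.mulVec_smul, hXdef]
      simp only
      rw [Matrix.mulVec_mulVec, ← pow_succ']
    rw [hTy, Finset.smul_sum]
    have hsm : ∀ i ∈ range k, a • a ^ i • X (i+1) = a ^ (i+1) • X (i+1) := by
      intro i _; rw [smul_smul, ← pow_succ']
    rw [Finset.sum_congr rfl hsm, ← Finset.sum_sub_distrib,
      Finset.sum_range_sub' (fun i => a ^ i • X i) k]
    rw [pow_zero, one_smul, hX0, hak, hwdef]
  have claim2 : ∑ j ∈ range k, y j = (k : ℂ) • z := by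
    rw [hydef]
    simp only
    rw [Finset.sum_comm]
    have hterm : ∀ i ∈ range k, ∑ j ∈ range k, ((ω ^ j * u) ^ i) • X i
        = ((∑ j ∈ range k, (ω ^ i) ^ j) * u ^ i) • X i := by
      intro i _
      rw [← Finset.sum_smul, Finset.sum_mul]
      refine congrArg (· • X i) (Finset.sum_congr rfl fun j _ => ?_)
      rw [mul_pow, pow_right_comm]
    rw [Finset.sum_congr rfl hterm]
    rw [Finset.sum_eq_single 0]
    · simp only [pow_zero, mul_one, one_pow]
      rw [hX0]
      simp
    · intro i hi hi0
      rw [horth i (by omega) (by exact mem_range.mp hi), zero_mul, zero_smul]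
    · intro h
      exact absurd (mem_range.mpr (by omega : 0 < k)) h
  have claim3 : ∀ j ∈ range k, 0 ≤ (star (y j) ⬝ᵥ w).re := by
    intro j _
    rw [← claim1 j, dotProduct_sub, dotProduct_smul, star_dot_self, smul_eq_mul]
    have habsa : ‖ω ^ j * u‖ = 1 := by
      rw [norm_mul, norm_pow, habsω, habsu, one_pow, one_mul]
    have h1 : ((ω ^ j * u) * (star (y j) ⬝ᵥ (T *ᵥ y j))).re
        ≤ ∑ v, Complex.normSq (y j v) := by
      calc ((ω ^ j * u) * (star (y j) ⬝ᵥ (T *ᵥ y j))).re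
          ≤ ‖(ω ^ j * u) * (star (y j) ⬝ᵥ (T *ᵥ y j))‖ := Complex.re_le_norm _
        _ = ‖star (y j) ⬝ᵥ (T *ᵥ y j)‖ := by rw [norm_mul, habsa, one_mul]
        _ ≤ ∑ v, Complex.normSq (y j v) := hT (y j)
    rw [Complex.sub_re, Complex.ofReal_re]
    linarith [h1]
  have hsum : (0:ℝ) ≤ ((k : ℂ) * (star z ⬝ᵥ w)).re := by
    have h1 : ∑ j ∈ range k, (star (y j) ⬝ᵥ w) = (k : ℂ) * (star z ⬝ᵥ w) := by
      rw [← sum_dotProduct']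
      have : ∑ j ∈ range k, star (y j) = star (∑ j ∈ range k, y j) := by
        rw [star_sum]
      rw [this, claim2, star_smul, star_natCast, smul_dotProduct]
      simp [smul_eq_mul]
    have h2 : (0:ℝ) ≤ (∑ j ∈ range k, (star (y j) ⬝ᵥ w)).re := by
      rw [Complex.re_sum]
      exact Finset.sum_nonneg claim3
    rwa [h1] at h2
  have hzw : star z ⬝ᵥ w = ((∑ v, Complex.normSq (z v) : ℝ) : ℂ) - ((‖φ‖ : ℝ) : ℂ) := by
    rw [hwdef, dotProduct_sub, dotProduct_smul, star_dot_self, smul_eq_mul, hXdef]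
    rw [show star z ⬝ᵥ ((T ^ k) *ᵥ z) = φ from rfl, hukφ]
  rw [hzw] at hsum
  have hre : ((k:ℂ) * (((∑ v, Complex.normSq (z v) : ℝ) : ℂ) - ((‖φ‖ : ℝ) : ℂ))).re
      = (k:ℝ) * ((∑ v, Complex.normSq (z v)) - ‖φ‖) := by
    push_cast
    simp [Complex.mul_re]
  rw [hre] at hsum
  have hkpos : (0:ℝ) < k := by exact_mod_cast (by omega : 0 < k)
  nlinarith [hsum]

/-- The numerical radius bound `w(AB) ≤ n²/4` for entrywise-nonnegative symmetric
matrices with `A + B ≤ J`. -/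
private lemma radius_bound (Ar Br : Matrix V V ℝ)
    (hA0 : ∀ u v, 0 ≤ Ar u v) (hB0 : ∀ u v, 0 ≤ Br u v)
    (hABle : ∀ u v, Ar u v + Br u v ≤ 1)
    (hAsymm : ∀ u v, Ar u v = Ar v u)
    (z : V → ℂ) :
    ‖star z ⬝ᵥ ((Ar.map Complex.ofReal * Br.map Complex.ofReal) *ᵥ z)‖
      ≤ (Fintype.card V : ℝ) ^ 2 / 4 * ∑ v, Complex.normSq (z v) := by
  classical
  set Ac := Ar.map Complex.ofReal with hAc
  set Bc := Br.map Complex.ofReal with hBc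
  set y : V → ℝ := fun u => ‖z u‖ with hy
  have hy0 : ∀ u, 0 ≤ y u := fun u => norm_nonneg _
  have step1 : star z ⬝ᵥ ((Ac * Bc) *ᵥ z) = ∑ v, (star (Ac *ᵥ z)) v * (Bc *ᵥ z) v := by
    rw [← Matrix.mulVec_mulVec, Matrix.dotProduct_mulVec]
    have : star z ᵥ* Ac = star (Ac *ᵥ z) := by
      funext v
      simp only [Matrix.vecMul, Matrix.mulVec, dotProduct, Pi.star_apply, star_sum, star_mul']
      refine Finset.sum_congr rfl fun u _ => ?_
      rw [hAc]
      simp only [Matrix.map_apply]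
      rw [Complex.star_def, Complex.conj_ofReal, hAsymm u v, mul_comm]
    rw [this]
    rfl
  have step2 : ‖star z ⬝ᵥ ((Ac * Bc) *ᵥ z)‖
      ≤ ∑ v, (Ar *ᵥ y) v * (Br *ᵥ y) v := by
    rw [step1]
    refine (norm_sum_le _ _).trans ?_
    refine Finset.sum_le_sum fun v _ => ?_
    rw [norm_mul]
    have hAv : ‖(star (Ac *ᵥ z)) v‖ ≤ (Ar *ᵥ y) v := by
      rw [Pi.star_apply, Complex.star_def, Complex.norm_conj]
      refine (norm_sum_le _ _).trans ?_
      refine le_of_eq (Finset.sum_congr rfl fun u _ => ?_)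
      rw [norm_mul, hAc]
      simp only [Matrix.map_apply]
      rw [Complex.norm_real, Real.norm_eq_abs, _root_.abs_of_nonneg (hA0 v u)]
    have hBv : ‖(Bc *ᵥ z) v‖ ≤ (Br *ᵥ y) v := by
      refine (norm_sum_le _ _).trans ?_
      refine le_of_eq (Finset.sum_congr rfl fun u _ => ?_)
      rw [norm_mul, hBc]
      simp only [Matrix.map_apply]
      rw [Complex.norm_real, Real.norm_eq_abs, _root_.abs_of_nonneg (hB0 v u)]
    have h1 : 0 ≤ (Ar *ᵥ y) v := Finset.sum_nonneg fun u _ => mul_nonneg (hA0 v u) (hy0 u)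
    exact mul_le_mul hAv hBv (norm_nonneg _) h1
  have step3 : ∀ v, (Ar *ᵥ y) v * (Br *ᵥ y) v ≤ (∑ u, y u) ^ 2 / 4 := by
    intro v
    have ha : 0 ≤ (Ar *ᵥ y) v := Finset.sum_nonneg fun u _ => mul_nonneg (hA0 v u) (hy0 u)
    have hb : 0 ≤ (Br *ᵥ y) v := Finset.sum_nonneg fun u _ => mul_nonneg (hB0 v u) (hy0 u)
    have hab : (Ar *ᵥ y) v + (Br *ᵥ y) v ≤ ∑ u, y u := by
      have : (Ar *ᵥ y) v + (Br *ᵥ y) v = ∑ u, (Ar v u + Br v u) * y u := by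
        simp only [Matrix.mulVec, dotProduct, ← Finset.sum_add_distrib, add_mul]
      rw [this]
      refine Finset.sum_le_sum fun u _ => ?_
      nlinarith [hABle v u, hy0 u, hA0 v u, hB0 v u]
    nlinarith [sq_nonneg ((Ar *ᵥ y) v - (Br *ᵥ y) v), sq_nonneg ((Ar *ᵥ y) v + (Br *ᵥ y) v)]
  have stepCS : (∑ u, y u) ^ 2 ≤ (Fintype.card V : ℝ) * ∑ u, Complex.normSq (z u) := by
    have h := Finset.sum_mul_sq_le_sq_mul_sq Finset.univ y (fun _ => (1:ℝ))
    simp only [mul_one, one_pow] at h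
    calc (∑ u, y u) ^ 2 ≤ (∑ u, y u ^ 2) * ∑ _u : V, (1:ℝ) := h
      _ = (Fintype.card V : ℝ) * ∑ u, Complex.normSq (z u) := by
          rw [Finset.sum_const, card_univ]
          simp only [nsmul_eq_mul, mul_one, mul_comm]
          congr 1
          refine Finset.sum_congr rfl fun u _ => ?_
          rw [hy]
          exact Complex.sq_norm (z u)
  calc ‖star z ⬝ᵥ ((Ac * Bc) *ᵥ z)‖ ≤ ∑ v, (Ar *ᵥ y) v * (Br *ᵥ y) v := step2
    _ ≤ ∑ _v : V, (∑ u, y u) ^ 2 / 4 := Finset.sum_le_sum fun v _ => step3 v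
    _ = (Fintype.card V : ℝ) * ((∑ u, y u) ^ 2 / 4) := by
        rw [Finset.sum_const, card_univ, nsmul_eq_mul]
    _ ≤ (Fintype.card V : ℝ) ^ 2 / 4 * ∑ v, Complex.normSq (z v) := by
        have hn : (0:ℝ) ≤ (Fintype.card V : ℝ) := Nat.cast_nonneg _
        nlinarith [stepCS]

/-- Sharpened bound on the total weight of alternating walks. -/
private lemma entry_sum_bound (Ar Br : Matrix V V ℝ)
    (hA0 : ∀ u v, 0 ≤ Ar u v) (hB0 : ∀ u v, 0 ≤ Br u v)
    (hABle : ∀ u v, Ar u v + Br u v ≤ 1)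
    (hAsymm : ∀ u v, Ar u v = Ar v u)
    (k : ℕ) (hk : 1 ≤ k) :
    ∑ u, ∑ v, ((Ar * Br) ^ k) u v
      ≤ (Fintype.card V : ℝ) ^ (2 * k + 1) / 4 ^ k := by
  rcases isEmpty_or_nonempty V with hV | hV
  · simp
  set n : ℝ := (Fintype.card V : ℝ) with hn
  have hn1 : (1:ℝ) ≤ n := by
    rw [hn]
    exact_mod_cast Fintype.card_pos
  set c : ℝ := n ^ 2 / 4 with hc
  have hcpos : 0 < c := by positivity
  set Ac := Ar.map Complex.ofReal with hAc
  set Bc := Br.map Complex.ofReal with hBc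
  set Mc := Ac * Bc with hMc
  set T : Matrix V V ℂ := ((c : ℂ))⁻¹ • Mc with hT
  have hMcT : Mc = (c : ℂ) • T := by
    rw [hT, smul_inv_smul₀ (by exact_mod_cast hcpos.ne' : (c:ℂ) ≠ 0)]
  have hTbound : ∀ z : V → ℂ,
      ‖star z ⬝ᵥ (T *ᵥ z)‖ ≤ ∑ v, Complex.normSq (z v) := by
    intro z
    rw [hT, Matrix.smul_mulVec, dotProduct_smul, smul_eq_mul, norm_mul]
    rw [norm_inv, Complex.norm_real, Real.norm_eq_abs, _root_.abs_of_pos hcpos]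
    rw [inv_mul_le_iff₀ hcpos]
    calc ‖star z ⬝ᵥ (Mc *ᵥ z)‖
        ≤ n ^ 2 / 4 * ∑ v, Complex.normSq (z v) := radius_bound Ar Br hA0 hB0 hABle hAsymm z
      _ = c * ∑ v, Complex.normSq (z v) := by rw [hc]
  set o : V → ℂ := fun _ => 1 with ho
  have hstaro : star o = o := by funext v; simp [ho]
  have hNo : ∑ v, Complex.normSq (o v) = n := by
    simp [ho, hn, Finset.card_univ]
  have hmain : ‖o ⬝ᵥ ((Mc ^ k) *ᵥ o)‖ ≤ c ^ k * n := by
    have h1 : Mc ^ k = ((c:ℂ) ^ k) • (T ^ k) := by rw [hMcT, smul_pow]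
    rw [h1, Matrix.smul_mulVec, dotProduct_smul, smul_eq_mul, norm_mul]
    rw [norm_pow, Complex.norm_real, Real.norm_eq_abs, _root_.abs_of_pos hcpos]
    have h2 := pearcy T hTbound k hk o
    rw [hstaro, hNo] at h2
    exact mul_le_mul_of_nonneg_left h2 (by positivity)
  have hid : o ⬝ᵥ ((Mc ^ k) *ᵥ o) = ((∑ u, ∑ v, ((Ar * Br) ^ k) u v : ℝ) : ℂ) := by
    have hmap : Mc ^ k = ((Ar * Br) ^ k).map Complex.ofReal := by
      rw [hMc, hAc, hBc]
      have h1 : Ar.map Complex.ofReal = Complex.ofRealHom.mapMatrix Ar := rfl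
      have h2 : Br.map Complex.ofReal = Complex.ofRealHom.mapMatrix Br := rfl
      rw [h1, h2, ← _root_.map_mul, ← map_pow]
      rfl
    rw [hmap]
    simp only [dotProduct, Matrix.mulVec, ho, Matrix.map_apply, one_mul, mul_one]
    push_cast
    rfl
  have hfin : (∑ u, ∑ v, ((Ar * Br) ^ k) u v : ℝ) ≤ c ^ k * n := by
    have := hmain
    rw [hid, Complex.norm_real, Real.norm_eq_abs] at this
    exact (le_abs_self _).trans this
  calc (∑ u, ∑ v, ((Ar * Br) ^ k) u v : ℝ) ≤ c ^ k * n := hfin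
    _ = n ^ (2 * k + 1) / 4 ^ k := by
        rw [hc, div_pow, ← pow_mul, pow_succ, mul_comm (2:ℕ) k]
        ring

end Analytic

section Combinatorial

variable {V : Type} [Fintype V] [DecidableEq V]

private lemma walk_sum (m : ℕ) (W : ℕ → Matrix V V ℝ) (f : V → ℝ) :
    ∑ x : Fin (m+1) → V, (∏ i : Fin m, W i.val (x i.castSucc) (x i.succ)) * f (x (Fin.last m))
      = ∑ u, (((List.range m).map W).prod *ᵥ f) u := by
  induction m generalizing f with
  | zero =>
      simp only [List.range_zero, List.map_nil, List.prod_nil, Matrix.one_mulVec]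
      rw [← Equiv.sum_comp (Equiv.funUnique (Fin 1) V).symm
        (fun x : Fin 1 → V => (∏ i : Fin 0, W i.val (x i.castSucc) (x i.succ)) * f (x (Fin.last 0)))]
      simp
  | succ m ih =>
      rw [← Equiv.sum_comp (Fin.snocEquiv (fun _ => V))
        (fun x : Fin (m+2) → V =>
          (∏ i : Fin (m+1), W i.val (x i.castSucc) (x i.succ)) * f (x (Fin.last (m+1))))]
      have hterm : ∀ (v : V) (x' : Fin (m+1) → V),
          (∏ i : Fin (m+1), W i.val ((Fin.snoc x' v : Fin (m+2) → V) i.castSucc)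
              ((Fin.snoc x' v : Fin (m+2) → V) i.succ))
            * f ((Fin.snoc x' v : Fin (m+2) → V) (Fin.last (m+1)))
          = ((∏ i : Fin m, W i.val (x' i.castSucc) (x' i.succ)) *
              (W m (x' (Fin.last m)) v * f v)) := by
        intro v x'
        rw [Fin.prod_univ_castSucc
          (fun i : Fin (m+1) => W i.val ((Fin.snoc x' v : Fin (m+2) → V) i.castSucc)
            ((Fin.snoc x' v : Fin (m+2) → V) i.succ))]
        rw [Fin.snoc_last]
        have h1 : ∀ i : Fin m,
            W (i.castSucc).val ((Fin.snoc x' v : Fin (m+2) → V) i.castSucc.castSucc)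
              ((Fin.snoc x' v : Fin (m+2) → V) i.castSucc.succ)
            = W i.val (x' i.castSucc) (x' i.succ) := by
          intro i
          rw [Fin.succ_castSucc, Fin.snoc_castSucc, Fin.snoc_castSucc, Fin.coe_castSucc]
        rw [Finset.prod_congr rfl (fun i _ => h1 i)]
        rw [Fin.succ_last, Fin.snoc_last, Fin.snoc_castSucc]
        simp only [Fin.val_last]
        ring
      calc ∑ p : V × (Fin (m+1) → V),
              (∏ i : Fin (m+1), W i.val ((Fin.snocEquiv (fun _ => V)) p i.castSucc)
                ((Fin.snocEquiv (fun _ => V)) p i.succ))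
                * f ((Fin.snocEquiv (fun _ => V)) p (Fin.last (m+1)))
            = ∑ v : V, ∑ x' : Fin (m+1) → V,
              (∏ i : Fin m, W i.val (x' i.castSucc) (x' i.succ)) *
                (W m (x' (Fin.last m)) v * f v) := by
              rw [Fintype.sum_prod_type]
              exact Finset.sum_congr rfl fun v _ =>
                Finset.sum_congr rfl fun x' _ => hterm v x'
        _ = ∑ x' : Fin (m+1) → V, ∑ v : V,
              (∏ i : Fin m, W i.val (x' i.castSucc) (x' i.succ)) *
                (W m (x' (Fin.last m)) v * f v) := Finset.sum_comm
        _ = ∑ x' : Fin (m+1) → V,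
              (∏ i : Fin m, W i.val (x' i.castSucc) (x' i.succ)) *
                ((W m *ᵥ f) (x' (Fin.last m))) := by
              refine Finset.sum_congr rfl fun x' _ => ?_
              rw [← Finset.mul_sum]
              rfl
        _ = ∑ u, (((List.range m).map W).prod *ᵥ (W m *ᵥ f)) u := ih (W m *ᵥ f)
        _ = ∑ u, (((List.range (m+1)).map W).prod *ᵥ f) u := by
              refine Finset.sum_congr rfl fun u _ => ?_
              rw [Matrix.mulVec_mulVec, List.range_succ, List.map_append, List.prod_append]
              simp

private lemma alt_list_prod (Ar Br : Matrix V V ℝ) (k : ℕ) :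
    ((List.range (2*k)).map (fun i => if Even i then Ar else Br)).prod = (Ar * Br) ^ k := by
  induction k with
  | zero => simp
  | succ k ih =>
      have h2 : 2 * (k+1) = (2*k+1)+1 := by ring
      rw [h2, List.range_succ, List.range_succ, List.map_append, List.map_append,
        List.prod_append, List.prod_append]
      simp only [List.map_cons, List.map_nil, List.prod_cons, List.prod_nil]
      rw [ih]
      rw [if_pos (even_two_mul k), if_neg (by simp [Nat.even_add_one, Nat.not_even_iff_odd,
        Nat.odd_iff] )]
      rw [pow_succ]
      noncomm_ring

private lemma isHom_altPath_iff (m : ℕ) (G : EdgeColouredGraph) (φ : Fin (m+1) → G.V) :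
    IsHom (altPath m) G φ ↔ ∀ i : Fin m,
      (if Even (i.val) then G.red.Adj (φ i.castSucc) (φ i.succ)
       else G.blue.Adj (φ i.castSucc) (φ i.succ)) := by
  constructor
  · rintro ⟨hr, hb⟩ i
    have hne : (i.castSucc : Fin (m+1)) ≠ i.succ := by
      intro h
      have := congrArg Fin.val h
      simp only [Fin.coe_castSucc, Fin.val_succ] at this
      omega
    by_cases hev : Even (i.val)
    · rw [if_pos hev]
      apply hr
      show (SimpleGraph.fromRel _).Adj _ _
      refine (SimpleGraph.fromRel_adj _ _ _).mpr ?_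
      refine ⟨hne, Or.inl ⟨?_, ?_⟩⟩
      · rw [Fin.coe_castSucc, Fin.val_succ]
      · rwa [Fin.coe_castSucc]
    · rw [if_neg hev]
      apply hb
      show (SimpleGraph.fromRel _).Adj _ _
      refine (SimpleGraph.fromRel_adj _ _ _).mpr ?_
      refine ⟨hne, Or.inl ⟨?_, ?_⟩⟩
      · rw [Fin.coe_castSucc, Fin.val_succ]
      · rw [Fin.coe_castSucc]
        exact Nat.not_even_iff_odd.mp hev
  · intro h
    constructor
    · show ∀ ⦃u v : Fin (m+1)⦄,
        (SimpleGraph.fromRel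
          (fun i j : Fin (m+1) => (i : ℕ) + 1 = (j : ℕ) ∧ Even (i : ℕ))).Adj u v →
          G.red.Adj (φ u) (φ v)
      intro u v huv
      rw [SimpleGraph.fromRel_adj] at huv
      obtain ⟨hne, ⟨hval, hev⟩ | ⟨hval, hev⟩⟩ := huv
      · have hu : (u : ℕ) < m := by have := v.isLt; omega
        have hi := h ⟨(u : ℕ), hu⟩
        rw [if_pos (by simpa using hev)] at hi
        have hcs : (Fin.castSucc ⟨(u : ℕ), hu⟩) = u := by apply Fin.ext; simp
        have hsc : (Fin.succ ⟨(u : ℕ), hu⟩) = v := by apply Fin.ext; simp [hval]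
        rwa [hcs, hsc] at hi
      · have hv : (v : ℕ) < m := by have := u.isLt; omega
        have hi := h ⟨(v : ℕ), hv⟩
        rw [if_pos (by simpa using hev)] at hi
        have hcs : (Fin.castSucc ⟨(v : ℕ), hv⟩) = v := by apply Fin.ext; simp
        have hsc : (Fin.succ ⟨(v : ℕ), hv⟩) = u := by apply Fin.ext; simp [hval]
        rw [hcs, hsc] at hi
        exact hi.symm
    · show ∀ ⦃u v : Fin (m+1)⦄,
        (SimpleGraph.fromRel
          (fun i j : Fin (m+1) => (i : ℕ) + 1 = (j : ℕ) ∧ Odd (i : ℕ))).Adj u v →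
          G.blue.Adj (φ u) (φ v)
      intro u v huv
      rw [SimpleGraph.fromRel_adj] at huv
      obtain ⟨hne, ⟨hval, hev⟩ | ⟨hval, hev⟩⟩ := huv
      · have hu : (u : ℕ) < m := by have := v.isLt; omega
        have hi := h ⟨(u : ℕ), hu⟩
        rw [if_neg (by simpa [Nat.even_iff, Nat.odd_iff] using hev)] at hi
        have hcs : (Fin.castSucc ⟨(u : ℕ), hu⟩) = u := by apply Fin.ext; simp
        have hsc : (Fin.succ ⟨(u : ℕ), hu⟩) = v := by apply Fin.ext; simp [hval]
        rwa [hcs, hsc] at hi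
      · have hv : (v : ℕ) < m := by have := u.isLt; omega
        have hi := h ⟨(v : ℕ), hv⟩
        rw [if_neg (by simpa [Nat.even_iff, Nat.odd_iff] using hev)] at hi
        have hcs : (Fin.castSucc ⟨(v : ℕ), hv⟩) = v := by apply Fin.ext; simp
        have hsc : (Fin.succ ⟨(v : ℕ), hv⟩) = u := by apply Fin.ext; simp [hval]
        rw [hcs, hsc] at hi
        exact hi.symm

end Combinatorial

theorem altPath_even_density_le (k : ℕ) (hk : 1 ≤ k) (G : EdgeColouredGraph) :
    homDensity (altPath (2 * k)) G ≤ (1 / 2 : ℝ) ^ (2 * k) := by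
  classical
  set m : ℕ := 2 * k with hm
  set n : ℕ := Fintype.card G.V with hn
  -- indicator matrices
  set Ar : Matrix G.V G.V ℝ := fun u v => if G.red.Adj u v then 1 else 0 with hAr
  set Br : Matrix G.V G.V ℝ := fun u v => if G.blue.Adj u v then 1 else 0 with hBr
  have hA0 : ∀ u v, 0 ≤ Ar u v := by intro u v; rw [hAr]; dsimp only; split <;> norm_num
  have hB0 : ∀ u v, 0 ≤ Br u v := by intro u v; rw [hBr]; dsimp only; split <;> norm_num
  have hABle : ∀ u v, Ar u v + Br u v ≤ 1 := by
    intro u v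
    rw [hAr, hBr]
    dsimp only
    by_cases hr : G.red.Adj u v
    · rw [if_pos hr, if_neg (fun hb => G.disjoint u v ⟨hr, hb⟩)]; norm_num
    · rw [if_neg hr]; split <;> norm_num
  have hAsymm : ∀ u v, Ar u v = Ar v u := by
    intro u v
    rw [hAr]
    dsimp only
    simp [SimpleGraph.adj_comm]
  -- the counting identity
  have hcount : (homCount (altPath m) G : ℝ) = ∑ u, ∑ v, ((Ar * Br) ^ k) u v := by
    have h1 : homCount (altPath m) G
        = Fintype.card {φ : (altPath m).V → G.V // IsHom (altPath m) G φ} := by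
      rw [homCount, Nat.card_eq_fintype_card]
    have h2 : (Fintype.card {φ : (altPath m).V → G.V // IsHom (altPath m) G φ} : ℝ)
        = ∑ x : Fin (m+1) → G.V, (if IsHom (altPath m) G x then (1:ℝ) else 0) := by
      rw [Fintype.card_subtype, Finset.card_filter]
      push_cast
      refine (Finset.sum_congr rfl fun x _ => ?_ :
        _ = ∑ x : (altPath m).V → G.V, (if IsHom (altPath m) G x then (1:ℝ) else 0)).trans
        (Fintype.sum_equiv (ι := (altPath m).V → G.V) (κ := Fin (m+1) → G.V)
          (Equiv.refl _) _ _ fun _ => rfl)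
      split <;> simp
    have h3 : ∀ x : Fin (m+1) → G.V, (if IsHom (altPath m) G x then (1:ℝ) else 0)
        = (∏ i : Fin m, (if Even i.val then Ar else Br) (x i.castSucc) (x i.succ)) * 1 := by
      intro x
      rw [mul_one]
      have hfact : ∀ i : Fin m,
          (if Even i.val then Ar else Br) (x i.castSucc) (x i.succ)
          = (if (if Even (i.val) then G.red.Adj (x i.castSucc) (x i.succ)
              else G.blue.Adj (x i.castSucc) (x i.succ)) then (1:ℝ) else 0) := by
        intro i
        by_cases hev : Even (i.val)
        · rw [if_pos hev, if_congr (Iff.rfl.trans (by rw [if_pos hev])) rfl rfl, hAr]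
        · rw [if_neg hev, if_congr (Iff.rfl.trans (by rw [if_neg hev])) rfl rfl, hBr]
      rw [Finset.prod_congr rfl (fun i _ => hfact i), Finset.prod_boole]
      by_cases hhom : IsHom (altPath m) G x
      · rw [if_pos hhom, if_pos]
        intro i _
        exact (isHom_altPath_iff m G x).mp hhom i
      · rw [if_neg hhom, if_neg]
        intro hall
        exact hhom ((isHom_altPath_iff m G x).mpr (fun i => hall i (Finset.mem_univ i)))
    calc (homCount (altPath m) G : ℝ)
        = ∑ x : Fin (m+1) → G.V, (if IsHom (altPath m) G x then (1:ℝ) else 0) := by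
          rw [h1, h2]
      _ = ∑ x : Fin (m+1) → G.V,
            (∏ i : Fin m, (if Even i.val then Ar else Br) (x i.castSucc) (x i.succ))
              * (fun _ => (1:ℝ)) (x (Fin.last m)) := by
          exact Finset.sum_congr rfl fun x _ => h3 x
      _ = ∑ u, (((List.range m).map (fun i => if Even i then Ar else Br)).prod
            *ᵥ (fun _ => (1:ℝ))) u :=
          walk_sum m (fun i => if Even i then Ar else Br) (fun _ => (1:ℝ))
      _ = ∑ u, (((Ar * Br) ^ k) *ᵥ (fun _ => (1:ℝ))) u := by
          rw [hm, alt_list_prod]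
      _ = ∑ u, ∑ v, ((Ar * Br) ^ k) u v := by
          refine Finset.sum_congr rfl fun u _ => ?_
          simp [Matrix.mulVec, dotProduct]
  have hbound : (homCount (altPath m) G : ℝ) ≤ (n : ℝ) ^ (2 * k + 1) / 4 ^ k := by
    rw [hcount, hn]
    exact entry_sum_bound Ar Br hA0 hB0 hABle hAsymm k hk
  -- final conversion
  have hcards : Nat.card (altPath m).V = m + 1 := by
    show Nat.card (Fin (m+1)) = m + 1
    simp
  have hcardG : Nat.card G.V = n := by rw [hn, Nat.card_eq_fintype_card]
  rw [homDensity, hcards, hcardG, hm]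
  rcases Nat.eq_zero_or_pos n with hn0 | hnpos
  · rw [hn0]
    push_cast
    rw [zero_pow (by omega : 2 * k + 1 ≠ 0), div_zero]
    positivity
  · have hnR : (0:ℝ) < (n:ℝ) ^ (2 * k + 1) := by positivity
    rw [div_le_iff₀ hnR]
    calc (homCount (altPath (2*k)) G : ℝ) ≤ (n : ℝ) ^ (2 * k + 1) / 4 ^ k := by
          rw [← hm]; exact hbound
      _ = (1/2 : ℝ) ^ (2*k) * (n:ℝ) ^ (2*k+1) := by
          rw [show (1/2 : ℝ) ^ (2*k) = 1 / 4 ^ k by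
            rw [pow_mul, show ((1:ℝ)/2)^2 = (4:ℝ)⁻¹ by norm_num, inv_pow, one_div]]
          ring
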